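/- In the AP mechanism, suppose agent i splits into pseudo-agents i' and i'' with O_{i'} ∪ O_{i''} = O_i, both winning in the same winning set S* of width w (so the width becomes w+1 after the split). If B^{−i'} ≤ r, B^{−i''} ≤ B^{−i}, then the post-split total payment B^{−i'} + B^{−i''} − 2c(S*) + c(S* ∩ O_i) − 2·pen(r, w+1) is at most the pre-split payment B^{−i} − (c(S* \ O_i) + pen(r, w)). -/

import Mathlib

/-- Splitting identifiers in AP does not increase the payment: the post-split total
payment is at most the pre-split payment. -/
theorem ap_split_not_profitable {α : Type*} [DecidableEq α]
    (r : ℝ) (hr : 0 ≤ r) (w : ℕ) (hw : 1 ≤ w)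
    (c : α → ℝ) (hc : ∀ a, 0 ≤ c a)
    (Sstar Oi : Finset α)
    (B B' B'' : ℝ) (hB' : B' ≤ r) (hB'' : B'' ≤ B) :
    B' + B'' - 2 * (∑ a ∈ Sstar, c a) + (∑ a ∈ Sstar ∩ Oi, c a)
        - 2 * ((1 - (2 : ℝ) ^ (1 - ((w : ℤ) + 1))) * r) ≤
      B - ((∑ a ∈ Sstar \ Oi, c a) + (1 - (2 : ℝ) ^ (1 - (w : ℤ))) * r) := by
  have hsum : ∑ a ∈ Sstar ∩ Oi, c a + ∑ a ∈ Sstar \ Oi, c a = ∑ a ∈ Sstar, c a :=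
    Finset.sum_inter_add_sum_sdiff Sstar Oi c
  have hpos : 0 ≤ ∑ a ∈ Sstar, c a := Finset.sum_nonneg fun a _ => hc a
  have h2 : (2 : ℝ) ^ (1 - ((w : ℤ) + 1)) * 2 = 2 ^ (1 - (w : ℤ)) := by
    rw [← zpow_add_one₀ (by norm_num : (2:ℝ) ≠ 0)]
    ring_nf
  nlinarith [hsum, hpos, hB', hB'']
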